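/- Let a : ℤ → ℂ^{r×r} be a finitely supported mask and v : ℤ → ℂ^{1×r} finitely supported, m ∈ ℕ, p⃗ := ((·)^m/m!)*v. Then S_a p⃗ is a vector polynomial of degree ≤ m if and only if v̂(2ξ) â(ξ+π) = O(|ξ|^{m+1}) as ξ → 0, which in turn holds if and only if for the coset sequences a^{[0]}(k) := a(2k) and a^{[1]}(k) := a(1+2k) one has v̂(ξ) \widehat{a^{[1]}}(ξ) e^{-iξ/2} = v̂(ξ) \widehat{a^{[0]}}(ξ) + O(|ξ|^{m+1}) as ξ → 0. -/

import Mathlib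

open Complex Polynomial

section AuxLemmas

lemma hasDerivAt_expsum {ι : Type*} (T : Finset ι) (c μ : ι → ℂ) (x : ℂ) :
    HasDerivAt (fun ξ : ℂ => ∑ t ∈ T, c t * Complex.exp (μ t * ξ))
      (∑ t ∈ T, c t * μ t * Complex.exp (μ t * x)) x := by
  refine HasDerivAt.fun_sum fun t _ => ?_
  have h : HasDerivAt (fun ξ : ℂ => Complex.exp (μ t * ξ)) (Complex.exp (μ t * x) * μ t) x := by
    simpa using ((hasDerivAt_id x).const_mul (μ t)).cexp
  have h2 := h.const_mul (c t)
  rw [show c t * μ t * Complex.exp (μ t * x) = c t * (Complex.exp (μ t * x) * μ t) by ring]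
  exact h2

lemma iteratedDeriv_expsum {ι : Type*} (T : Finset ι) (j : ℕ) :
    ∀ (c μ : ι → ℂ) (x : ℂ),
    iteratedDeriv j (fun ξ : ℂ => ∑ t ∈ T, c t * Complex.exp (μ t * ξ)) x
      = ∑ t ∈ T, c t * μ t ^ j * Complex.exp (μ t * x) := by
  induction j with
  | zero => intro c μ x; simp
  | succ n ih =>
    intro c μ x
    rw [iteratedDeriv_succ']
    have hder : (deriv fun ξ : ℂ => ∑ t ∈ T, c t * Complex.exp (μ t * ξ))
        = fun ξ : ℂ => ∑ t ∈ T, (c t * μ t) * Complex.exp (μ t * ξ) := by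
      funext y
      exact (hasDerivAt_expsum T c μ y).deriv
    rw [hder, ih]
    exact Finset.sum_congr rfl fun t _ => by ring

lemma iteratedDeriv_expsum_sub {ι κ : Type*} (T : Finset ι) (S : Finset κ)
    (c μ : ι → ℂ) (d ν : κ → ℂ) (j : ℕ) (x : ℂ) :
    iteratedDeriv j (fun ξ : ℂ => (∑ t ∈ T, c t * Complex.exp (μ t * ξ))
        - ∑ s ∈ S, d s * Complex.exp (ν s * ξ)) x
      = (∑ t ∈ T, c t * μ t ^ j * Complex.exp (μ t * x))
        - ∑ s ∈ S, d s * ν s ^ j * Complex.exp (ν s * x) := by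
  have h : (fun ξ : ℂ => (∑ t ∈ T, c t * Complex.exp (μ t * ξ))
        - ∑ s ∈ S, d s * Complex.exp (ν s * ξ))
      = fun ξ : ℂ => ∑ u ∈ T.disjSum S,
          Sum.elim c (fun s => -d s) u * Complex.exp (Sum.elim μ ν u * ξ) := by
    funext ξ
    rw [Finset.sum_disjSum]
    simp [neg_mul, sub_eq_add_neg]
  rw [h, iteratedDeriv_expsum, Finset.sum_disjSum]
  simp [neg_mul, sub_eq_add_neg]

lemma expsum_poly_eq_zero_iff {ι : Type*} (T : Finset ι) (c μ : ι → ℂ) (m : ℕ) :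
    (∑ t ∈ T, c t • ((X : ℂ[X]) - C (μ t)) ^ m) = 0 ↔
      ∀ j ≤ m, ∑ t ∈ T, c t * μ t ^ j = 0 := by
  have hcoeff : ∀ (z : ℂ) (k : ℕ),
      (((X : ℂ[X]) - C z) ^ m).coeff k = (-z) ^ (m - k) * (m.choose k : ℂ) := fun z k => by
    rw [sub_eq_add_neg, ← C_neg, coeff_X_add_C_pow]
  have hc : ∀ (k : ℕ),
      (∑ t ∈ T, c t • ((X : ℂ[X]) - C (μ t)) ^ m).coeff k
        = ((-1) ^ (m - k) * (m.choose k : ℂ)) * ∑ t ∈ T, c t * μ t ^ (m - k) := by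
    intro k
    rw [Polynomial.finset_sum_coeff, Finset.mul_sum]
    refine Finset.sum_congr rfl fun t _ => ?_
    rw [Polynomial.coeff_smul, hcoeff, smul_eq_mul, neg_pow]
    ring
  constructor
  · intro h j hj
    have h2 := congrArg (fun p : Polynomial ℂ => p.coeff (m - j)) h
    simp only [hc, Polynomial.coeff_zero] at h2
    rw [Nat.sub_sub_self hj] at h2
    rcases mul_eq_zero.1 h2 with h3 | h3
    · exfalso
      rcases mul_eq_zero.1 h3 with h4 | h4
      · exact (pow_ne_zero _ (by norm_num : (-1 : ℂ) ≠ 0)) h4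
      · exact (Nat.cast_ne_zero.2 (Nat.choose_pos (Nat.sub_le m j)).ne') h4
    · exact h3
  · intro h
    ext k
    rw [hc, Polynomial.coeff_zero]
    rcases le_or_gt k m with hk | hk
    · rw [h (m - k) (Nat.sub_le m k), mul_zero]
    · rw [Nat.choose_eq_zero_of_lt hk]
      simp

lemma expsum_poly_eq_iff {ι κ : Type*} (T : Finset ι) (S : Finset κ)
    (c μ : ι → ℂ) (d ν : κ → ℂ) (m : ℕ) :
    (∑ t ∈ T, c t • ((X : ℂ[X]) - C (μ t)) ^ m)
      = (∑ s ∈ S, d s • ((X : ℂ[X]) - C (ν s)) ^ m) ↔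
      ∀ j ≤ m, ∑ t ∈ T, c t * μ t ^ j = ∑ s ∈ S, d s * ν s ^ j := by
  rw [← sub_eq_zero]
  have hpoly : (∑ t ∈ T, c t • ((X : ℂ[X]) - C (μ t)) ^ m)
      - (∑ s ∈ S, d s • ((X : ℂ[X]) - C (ν s)) ^ m)
      = ∑ u ∈ T.disjSum S,
          Sum.elim c (fun s => -d s) u • ((X : ℂ[X]) - C (Sum.elim μ ν u)) ^ m := by
    rw [Finset.sum_disjSum]
    simp [neg_smul, sub_eq_add_neg]
  have hmom : ∀ j : ℕ,
      ∑ u ∈ T.disjSum S, Sum.elim c (fun s => -d s) u * (Sum.elim μ ν u) ^ j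
        = (∑ t ∈ T, c t * μ t ^ j) - ∑ s ∈ S, d s * ν s ^ j := by
    intro j
    rw [Finset.sum_disjSum]
    simp [neg_mul, sub_eq_add_neg]
  rw [hpoly, expsum_poly_eq_zero_iff]
  exact forall₂_congr fun j hj => by rw [hmom, sub_eq_zero]

lemma comp_translate_cancel (p : ℂ[X]) (c : ℂ) :
    (p.comp (X + C c)).comp (X - C c) = p := by
  rw [Polynomial.comp_assoc]
  simp

lemma poly_eq_of_int_eval (p q : ℂ[X]) (h : ∀ t : ℤ, p.eval (t : ℂ) = q.eval (t : ℂ)) :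
    p = q := by
  apply Polynomial.eq_of_infinite_eval_eq
  apply Set.Infinite.mono (s := Set.range (fun t : ℤ => (t : ℂ)))
  · rintro _ ⟨t, rfl⟩
    exact h t
  · exact Set.infinite_range_of_injective (fun x y hxy => by exact_mod_cast hxy)

lemma exp_neg_I_int_pi (k : ℤ) :
    Complex.exp (-Complex.I * k * (Real.pi : ℂ)) = (-1) ^ k := by
  have h : (-Complex.I * k * (Real.pi : ℂ)) = k * -((Real.pi : ℂ) * Complex.I) := by ring
  rw [h, Complex.exp_int_mul, Complex.exp_neg, Complex.exp_pi_mul_I]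
  norm_num

lemma neg_one_zpow_two_mul (k : ℤ) : ((-1 : ℂ)) ^ (2 * k) = 1 := by
  rw [zpow_mul]; norm_num

lemma neg_one_zpow_one_add_two_mul (k : ℤ) : ((-1 : ℂ)) ^ (1 + 2 * k) = -1 := by
  rw [zpow_add₀ (by norm_num : (-1 : ℂ) ≠ 0), zpow_mul]; norm_num

lemma sum_split_even_odd (Sa : Finset ℤ) (f : ℤ → ℂ) (hf : ∀ k ∉ Sa, f k = 0) :
    ∑ k ∈ Sa, f k
      = (∑ k ∈ (Sa.image (fun s => s / 2) ∪ Sa.image (fun s => (s - 1) / 2)), f (2 * k))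
        + ∑ k ∈ (Sa.image (fun s => s / 2) ∪ Sa.image (fun s => (s - 1) / 2)), f (1 + 2 * k) := by
  classical
  set K := Sa.image (fun s => s / 2) ∪ Sa.image (fun s => (s - 1) / 2) with hK
  have hsub : Sa ⊆ K.image (fun k => 2 * k) ∪ K.image (fun k => 1 + 2 * k) := by
    intro s hs
    rcases Int.even_or_odd s with ⟨t, ht⟩ | ⟨t, ht⟩
    · apply Finset.mem_union_left
      refine Finset.mem_image.2 ⟨t, ?_, by omega⟩
      exact Finset.mem_union_left _ (Finset.mem_image.2 ⟨s, hs, by omega⟩)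
    · apply Finset.mem_union_right
      refine Finset.mem_image.2 ⟨t, ?_, by omega⟩
      exact Finset.mem_union_right _ (Finset.mem_image.2 ⟨s, hs, by omega⟩)
  have hdisj : Disjoint (K.image (fun k => 2 * k)) (K.image (fun k => 1 + 2 * k)) := by
    rw [Finset.disjoint_left]
    rintro x hx hy
    rcases Finset.mem_image.1 hx with ⟨k1, _, h1⟩
    rcases Finset.mem_image.1 hy with ⟨k2, _, h2⟩
    omega
  rw [show (∑ k ∈ Sa, f k)
      = ∑ k ∈ K.image (fun k => 2 * k) ∪ K.image (fun k => 1 + 2 * k), f k from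
    Finset.sum_subset hsub (fun x _ hx => hf x hx)]
  rw [Finset.sum_union hdisj,
    Finset.sum_image (by intro x _ y _ h; simp only at h; omega),
    Finset.sum_image (by intro x _ y _ h; simp only at h; omega)]

lemma sum_rot {α β γ : Type*} (s : Finset α) (u : Finset β) (t : Finset γ)
    (f : α → β → γ → ℂ) :
    ∑ k ∈ s, ∑ i ∈ u, ∑ n ∈ t, f k i n = ∑ n ∈ t, ∑ k ∈ s, ∑ i ∈ u, f k i n := by
  rw [show (∑ k ∈ s, ∑ i ∈ u, ∑ n ∈ t, f k i n) = ∑ k ∈ s, ∑ n ∈ t, ∑ i ∈ u, f k i n from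
    Finset.sum_congr rfl fun k _ => Finset.sum_comm]
  exact Finset.sum_comm

end AuxLemmas


/-- Symbol (Fourier series) of a scalar sequence. -/
noncomputable def symb (u : ℤ → ℂ) (ξ : ℂ) : ℂ :=
  ∑ᶠ k : ℤ, u k * Complex.exp (-Complex.I * k * ξ)

/-- Entrywise symbol of a matrix-valued sequence. -/
noncomputable def symbM {r : ℕ} (a : ℤ → Fin r → Fin r → ℂ) (i ℓ : Fin r) (ξ : ℂ) : ℂ :=
  ∑ᶠ k : ℤ, a k i ℓ * Complex.exp (-Complex.I * k * ξ)

/-- Vector subdivision operator on row-vector sequences. -/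
noncomputable def sd {r : ℕ} (a : ℤ → Fin r → Fin r → ℂ) (w : ℤ → Fin r → ℂ) :
    ℤ → Fin r → ℂ :=
  fun j ℓ => 2 * ∑ᶠ k : ℤ, ∑ i : Fin r, w k i * a (j - 2 * k) i ℓ

/-- Convolution of a polynomial with a finitely supported sequence, as a polynomial. -/
noncomputable def pconv (q : Polynomial ℂ) (u : ℤ → ℂ) : Polynomial ℂ :=
  ∑ᶠ k : ℤ, u k • (q.comp (Polynomial.X - Polynomial.C (k : ℂ)))

lemma symb_eq_sum (u : ℤ → ℂ) (S : Finset ℤ) (hS : ∀ n ∉ S, u n = 0) (ξ : ℂ) :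
    symb u ξ = ∑ n ∈ S, u n * Complex.exp (-Complex.I * n * ξ) := by
  apply finsum_eq_finset_sum_of_support_subset
  intro n hn
  simp only [Function.mem_support] at hn
  by_contra hnS
  exact hn (by rw [hS n hnS, zero_mul])

lemma symbM_eq_sum {r : ℕ} (a : ℤ → Fin r → Fin r → ℂ) (i ℓ : Fin r) (S : Finset ℤ)
    (hS : ∀ k ∉ S, a k i ℓ = 0) (ξ : ℂ) :
    symbM a i ℓ ξ = ∑ k ∈ S, a k i ℓ * Complex.exp (-Complex.I * k * ξ) := by
  apply finsum_eq_finset_sum_of_support_subset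
  intro k hk
  simp only [Function.mem_support] at hk
  by_contra hkS
  exact hk (by rw [hS k hkS, zero_mul])

/-- `S_a p⃗` is a vector polynomial of degree ≤ m iff
`v̂(2ξ)â(ξ+π) = O(|ξ|^{m+1})` iff the coset condition
`v̂(ξ)â^{[1]}(ξ)e^{-iξ/2} = v̂(ξ)â^{[0]}(ξ) + O(|ξ|^{m+1})` holds. -/
theorem stmt6 (r m : ℕ) (a : ℤ → Fin r → Fin r → ℂ)
    (ha : (Function.support a).Finite)
    (v : ℤ → Fin r → ℂ) (hv : (Function.support v).Finite)
    (P : Fin r → Polynomial ℂ)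
    (hPdef : ∀ ℓ, P ℓ = pconv (Polynomial.C ((Nat.factorial m : ℂ))⁻¹ * Polynomial.X ^ m)
      (fun k => v k ℓ)) :
    ((∃ Q : Fin r → Polynomial ℂ, (∀ ℓ, (Q ℓ).natDegree ≤ m) ∧
        ∀ x : ℤ, ∀ ℓ, sd a (fun k i => (P i).eval ((k : ℂ))) x ℓ = (Q ℓ).eval ((x : ℂ))) ↔
      (∀ j ≤ m, ∀ ℓ : Fin r,
        iteratedDeriv j
          (fun ξ : ℂ => ∑ i : Fin r, symb (fun k => v k i) (2 * ξ) *
            symbM a i ℓ (ξ + (Real.pi : ℂ))) 0 = 0)) ∧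
    ((∀ j ≤ m, ∀ ℓ : Fin r,
        iteratedDeriv j
          (fun ξ : ℂ => ∑ i : Fin r, symb (fun k => v k i) (2 * ξ) *
            symbM a i ℓ (ξ + (Real.pi : ℂ))) 0 = 0) ↔
      (∀ j ≤ m, ∀ ℓ : Fin r,
        iteratedDeriv j
          (fun ξ : ℂ =>
            (∑ i : Fin r, symb (fun k => v k i) ξ *
              symbM (fun k => a (1 + 2 * k)) i ℓ ξ) * Complex.exp (-Complex.I * ξ / 2) -
            ∑ i : Fin r, symb (fun k => v k i) ξ *
              symbM (fun k => a (2 * k)) i ℓ ξ) 0 = 0)) := by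
  classical
  -- support finsets
  set Sv : Finset ℤ := hv.toFinset with hSvdef
  set Sa : Finset ℤ := ha.toFinset with hSadef
  have hv0 : ∀ n ∉ Sv, ∀ i, v n i = 0 := by
    intro n hn i
    have h : v n = 0 := by
      by_contra h
      exact hn (hv.mem_toFinset.2 h)
    rw [h]
    rfl
  have ha0 : ∀ k ∉ Sa, ∀ i ℓ, a k i ℓ = 0 := by
    intro k hk i ℓ
    have h : a k = 0 := by
      by_contra h
      exact hk (ha.mem_toFinset.2 h)
    rw [h]
    rfl
  set K : Finset ℤ := Sa.image (fun s => s / 2) ∪ Sa.image (fun s => (s - 1) / 2) with hKdef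
  have hK0 : ∀ k ∉ K, ∀ i ℓ, a (2 * k) i ℓ = 0 := by
    intro k hk i ℓ
    apply ha0
    intro hmem
    exact hk (Finset.mem_union_left _ (Finset.mem_image.2 ⟨2 * k, hmem, by omega⟩))
  have hK1 : ∀ k ∉ K, ∀ i ℓ, a (1 + 2 * k) i ℓ = 0 := by
    intro k hk i ℓ
    apply ha0
    intro hmem
    exact hk (Finset.mem_union_right _ (Finset.mem_image.2 ⟨1 + 2 * k, hmem, by omega⟩))
  -- index sets
  set TT : Finset (ℤ × ℤ × Fin r) := Sv ×ˢ (K ×ˢ (Finset.univ : Finset (Fin r))) with hTTdef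
  set TF : Finset (ℤ × ℤ × Fin r) := Sv ×ˢ (Sa ×ˢ (Finset.univ : Finset (Fin r))) with hTFdef
  have hTTsum : ∀ (g : ℤ → ℤ → Fin r → ℂ),
      ∑ x ∈ TT, g x.1 x.2.1 x.2.2 = ∑ n ∈ Sv, ∑ k ∈ K, ∑ i, g n k i := by
    intro g
    rw [hTTdef, Finset.sum_product]
    exact Finset.sum_congr rfl fun n _ => by rw [Finset.sum_product]
  have hTFsum : ∀ (g : ℤ → ℤ → Fin r → ℂ),
      ∑ x ∈ TF, g x.1 x.2.1 x.2.2 = ∑ n ∈ Sv, ∑ k ∈ Sa, ∑ i, g n k i := by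
    intro g
    rw [hTFdef, Finset.sum_product]
    exact Finset.sum_congr rfl fun n _ => by rw [Finset.sum_product]
  -- the central moment condition
  set S0 : ℕ → Fin r → ℂ := fun j ℓ =>
    ∑ x ∈ TT, (v x.1 x.2.2 * a (2 * x.2.1) x.2.2 ℓ) * ((x.1 : ℂ) + (x.2.1 : ℂ)) ^ j with hS0def
  set S1 : ℕ → Fin r → ℂ := fun j ℓ =>
    ∑ x ∈ TT, (v x.1 x.2.2 * a (1 + 2 * x.2.1) x.2.2 ℓ) * ((x.1 : ℂ) + (x.2.1 : ℂ) + 2⁻¹) ^ j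
    with hS1def
  -- key moment identity for the F-side
  have key : ∀ (j : ℕ) (ℓ : Fin r),
      ∑ x ∈ TF, (v x.1 x.2.2 * a x.2.1 x.2.2 ℓ * (-1 : ℂ) ^ x.2.1) *
          (((2 * x.1 + x.2.1 : ℤ) : ℂ)) ^ j
        = 2 ^ j * (S0 j ℓ - S1 j ℓ) := by
    intro j ℓ
    rw [hTFsum (fun n k i => (v n i * a k i ℓ * (-1 : ℂ) ^ k) * (((2 * n + k : ℤ) : ℂ)) ^ j)]
    rw [hS0def, hS1def]
    simp only
    rw [hTTsum (fun n k i => (v n i * a (2 * k) i ℓ) * (((n : ℂ) + (k : ℂ))) ^ j),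
        hTTsum (fun n k i => (v n i * a (1 + 2 * k) i ℓ) * (((n : ℂ) + (k : ℂ) + 2⁻¹)) ^ j)]
    rw [← Finset.sum_sub_distrib, Finset.mul_sum]
    refine Finset.sum_congr rfl fun n _ => ?_
    rw [sum_split_even_odd Sa
      (fun k => ∑ i, (v n i * a k i ℓ * (-1 : ℂ) ^ k) * (((2 * n + k : ℤ) : ℂ)) ^ j)
      (fun k hk => Finset.sum_eq_zero fun i _ => by rw [ha0 k hk i ℓ]; ring)]
    rw [← hKdef]
    rw [mul_sub, Finset.mul_sum, Finset.mul_sum, sub_eq_add_neg, ← Finset.sum_neg_distrib]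
    congr 1
    · refine Finset.sum_congr rfl fun k _ => ?_
      rw [Finset.mul_sum]
      refine Finset.sum_congr rfl fun i _ => ?_
      rw [neg_one_zpow_two_mul]
      push_cast
      rw [show (2 * (n : ℂ) + 2 * (k : ℂ)) = 2 * ((n : ℂ) + (k : ℂ)) by ring, mul_pow]
      ring
    · refine Finset.sum_congr rfl fun k _ => ?_
      rw [Finset.mul_sum, ← Finset.sum_neg_distrib]
      refine Finset.sum_congr rfl fun i _ => ?_
      rw [neg_one_zpow_one_add_two_mul]
      push_cast
      rw [show (2 * (n : ℂ) + (1 + 2 * (k : ℂ))) = 2 * ((n : ℂ) + (k : ℂ) + 2⁻¹) by ring,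
        mul_pow]
      ring
  -- representation of the F-side function as an exponential sum
  have hFrep : ∀ ℓ : Fin r,
      (fun ξ : ℂ => ∑ i : Fin r, symb (fun k => v k i) (2 * ξ) *
          symbM a i ℓ (ξ + (Real.pi : ℂ)))
        = fun ξ : ℂ => ∑ x ∈ TF, (v x.1 x.2.2 * a x.2.1 x.2.2 ℓ * (-1 : ℂ) ^ x.2.1) *
            Complex.exp ((-Complex.I * ((2 * x.1 + x.2.1 : ℤ) : ℂ)) * ξ) := by
    intro ℓ
    funext ξ
    rw [hTFsum (fun n k i => (v n i * a k i ℓ * (-1 : ℂ) ^ k) *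
      Complex.exp ((-Complex.I * ((2 * n + k : ℤ) : ℂ)) * ξ))]
    have step1 : ∑ i : Fin r, symb (fun k => v k i) (2 * ξ) * symbM a i ℓ (ξ + (Real.pi : ℂ))
        = ∑ i : Fin r, ∑ n ∈ Sv, ∑ k ∈ Sa,
            (v n i * Complex.exp (-Complex.I * (n : ℂ) * (2 * ξ))) *
              (a k i ℓ * Complex.exp (-Complex.I * (k : ℂ) * (ξ + (Real.pi : ℂ)))) := by
      refine Finset.sum_congr rfl fun i _ => ?_
      rw [symb_eq_sum (fun k => v k i) Sv (fun n hn => hv0 n hn i),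
        symbM_eq_sum a i ℓ Sa (fun k hk => ha0 k hk i ℓ), Finset.sum_mul_sum]
    rw [step1, Finset.sum_comm]
    refine Finset.sum_congr rfl fun n _ => ?_
    rw [Finset.sum_comm]
    refine Finset.sum_congr rfl fun k _ => ?_
    refine Finset.sum_congr rfl fun i _ => ?_
    have h2 : Complex.exp (-Complex.I * (k : ℂ) * (ξ + (Real.pi : ℂ)))
        = (-1 : ℂ) ^ k * Complex.exp (-Complex.I * (k : ℂ) * ξ) := by
      rw [show -Complex.I * (k : ℂ) * (ξ + (Real.pi : ℂ))
          = (-Complex.I * (k : ℂ) * ξ) + (-Complex.I * (k : ℂ) * (Real.pi : ℂ)) by ring,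
        Complex.exp_add, exp_neg_I_int_pi]
      ring
    have h3 : Complex.exp (-Complex.I * (n : ℂ) * (2 * ξ)) *
          Complex.exp (-Complex.I * (k : ℂ) * ξ)
        = Complex.exp ((-Complex.I * ((2 * n + k : ℤ) : ℂ)) * ξ) := by
      rw [← Complex.exp_add]
      congr 1
      push_cast
      ring
    rw [h2, ← h3]
    ring
  -- derivative formula for the F-side
  have hFder : ∀ (j : ℕ) (ℓ : Fin r),
      iteratedDeriv j (fun ξ : ℂ => ∑ i : Fin r, symb (fun k => v k i) (2 * ξ) *
          symbM a i ℓ (ξ + (Real.pi : ℂ))) 0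
        = (-Complex.I) ^ j * (2 ^ j * (S0 j ℓ - S1 j ℓ)) := by
    intro j ℓ
    rw [hFrep ℓ, iteratedDeriv_expsum]
    rw [← key j ℓ, Finset.mul_sum]
    refine Finset.sum_congr rfl fun x _ => ?_
    rw [mul_zero, Complex.exp_zero, mul_one, mul_pow]
    ring
  -- the F-side condition is equivalent to the moment condition
  have hFiff : (∀ j ≤ m, ∀ ℓ : Fin r,
      iteratedDeriv j (fun ξ : ℂ => ∑ i : Fin r, symb (fun k => v k i) (2 * ξ) *
          symbM a i ℓ (ξ + (Real.pi : ℂ))) 0 = 0) ↔ (∀ j ≤ m, ∀ ℓ : Fin r, S0 j ℓ = S1 j ℓ) := by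
    have hpt : ∀ (j : ℕ) (ℓ : Fin r),
        (iteratedDeriv j (fun ξ : ℂ => ∑ i : Fin r, symb (fun k => v k i) (2 * ξ) *
          symbM a i ℓ (ξ + (Real.pi : ℂ))) 0 = 0) ↔ S0 j ℓ = S1 j ℓ := by
      intro j ℓ
      rw [hFder j ℓ]
      constructor
      · intro h
        have hne : ((-Complex.I) ^ j : ℂ) ≠ 0 :=
          pow_ne_zero _ (neg_ne_zero.2 Complex.I_ne_zero)
        have hne2 : ((2 : ℂ) ^ j) ≠ 0 := pow_ne_zero _ two_ne_zero
        have h5 := (mul_eq_zero.1 h).resolve_left hne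
        have h6 := (mul_eq_zero.1 h5).resolve_left hne2
        exact sub_eq_zero.1 h6
      · intro h
        rw [h, sub_self, mul_zero, mul_zero]
    constructor
    · intro h j hj ℓ
      exact (hpt j ℓ).1 (h j hj ℓ)
    · intro h j hj ℓ
      exact (hpt j ℓ).2 (h j hj ℓ)
  -- representation of the G-side function
  have hGrep : ∀ ℓ : Fin r,
      (fun ξ : ℂ =>
          (∑ i : Fin r, symb (fun k => v k i) ξ *
            symbM (fun k => a (1 + 2 * k)) i ℓ ξ) * Complex.exp (-Complex.I * ξ / 2) -
          ∑ i : Fin r, symb (fun k => v k i) ξ *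
            symbM (fun k => a (2 * k)) i ℓ ξ)
        = fun ξ : ℂ =>
            (∑ x ∈ TT, (v x.1 x.2.2 * a (1 + 2 * x.2.1) x.2.2 ℓ) *
              Complex.exp ((-Complex.I * ((x.1 : ℂ) + (x.2.1 : ℂ) + 2⁻¹)) * ξ)) -
            ∑ x ∈ TT, (v x.1 x.2.2 * a (2 * x.2.1) x.2.2 ℓ) *
              Complex.exp ((-Complex.I * ((x.1 : ℂ) + (x.2.1 : ℂ))) * ξ) := by
    intro ℓ
    funext ξ
    congr 1
    · rw [hTTsum (fun n k i => (v n i * a (1 + 2 * k) i ℓ) *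
        Complex.exp ((-Complex.I * ((n : ℂ) + (k : ℂ) + 2⁻¹)) * ξ))]
      have step1 : ∑ i : Fin r, symb (fun k => v k i) ξ * symbM (fun k => a (1 + 2 * k)) i ℓ ξ
          = ∑ i : Fin r, ∑ n ∈ Sv, ∑ k ∈ K,
              (v n i * Complex.exp (-Complex.I * (n : ℂ) * ξ)) *
                (a (1 + 2 * k) i ℓ * Complex.exp (-Complex.I * (k : ℂ) * ξ)) := by
        refine Finset.sum_congr rfl fun i _ => ?_
        rw [symb_eq_sum (fun k => v k i) Sv (fun n hn => hv0 n hn i),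
          symbM_eq_sum (fun k => a (1 + 2 * k)) i ℓ K (fun k hk => hK1 k hk i ℓ),
          Finset.sum_mul_sum]
      rw [step1]
      simp only [Finset.sum_mul]
      rw [Finset.sum_comm]
      refine Finset.sum_congr rfl fun n _ => ?_
      rw [Finset.sum_comm]
      refine Finset.sum_congr rfl fun k _ => ?_
      refine Finset.sum_congr rfl fun i _ => ?_
      have hmerge : Complex.exp (-Complex.I * (n : ℂ) * ξ) *
            Complex.exp (-Complex.I * (k : ℂ) * ξ) * Complex.exp (-Complex.I * ξ / 2)
          = Complex.exp ((-Complex.I * ((n : ℂ) + (k : ℂ) + 2⁻¹)) * ξ) := by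
        rw [← Complex.exp_add, ← Complex.exp_add]
        congr 1
        ring
      rw [← hmerge]
      ring
    · rw [hTTsum (fun n k i => (v n i * a (2 * k) i ℓ) *
        Complex.exp ((-Complex.I * ((n : ℂ) + (k : ℂ))) * ξ))]
      have step1 : ∑ i : Fin r, symb (fun k => v k i) ξ * symbM (fun k => a (2 * k)) i ℓ ξ
          = ∑ i : Fin r, ∑ n ∈ Sv, ∑ k ∈ K,
              (v n i * Complex.exp (-Complex.I * (n : ℂ) * ξ)) *
                (a (2 * k) i ℓ * Complex.exp (-Complex.I * (k : ℂ) * ξ)) := by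
        refine Finset.sum_congr rfl fun i _ => ?_
        rw [symb_eq_sum (fun k => v k i) Sv (fun n hn => hv0 n hn i),
          symbM_eq_sum (fun k => a (2 * k)) i ℓ K (fun k hk => hK0 k hk i ℓ),
          Finset.sum_mul_sum]
      rw [step1, Finset.sum_comm]
      refine Finset.sum_congr rfl fun n _ => ?_
      rw [Finset.sum_comm]
      refine Finset.sum_congr rfl fun k _ => ?_
      refine Finset.sum_congr rfl fun i _ => ?_
      have hmerge : Complex.exp (-Complex.I * (n : ℂ) * ξ) *
            Complex.exp (-Complex.I * (k : ℂ) * ξ)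
          = Complex.exp ((-Complex.I * ((n : ℂ) + (k : ℂ))) * ξ) := by
        rw [← Complex.exp_add]
        congr 1
        ring
      rw [← hmerge]
      ring
  -- derivative formula for the G-side
  have hGder : ∀ (j : ℕ) (ℓ : Fin r),
      iteratedDeriv j (fun ξ : ℂ =>
          (∑ i : Fin r, symb (fun k => v k i) ξ *
            symbM (fun k => a (1 + 2 * k)) i ℓ ξ) * Complex.exp (-Complex.I * ξ / 2) -
          ∑ i : Fin r, symb (fun k => v k i) ξ *
            symbM (fun k => a (2 * k)) i ℓ ξ) 0
        = (-Complex.I) ^ j * (S1 j ℓ - S0 j ℓ) := by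
    intro j ℓ
    rw [hGrep ℓ, iteratedDeriv_expsum_sub]
    rw [hS0def, hS1def]
    simp only
    rw [mul_sub, Finset.mul_sum, Finset.mul_sum]
    congr 1
    · refine Finset.sum_congr rfl fun x _ => ?_
      rw [mul_zero, Complex.exp_zero, mul_one, mul_pow]
      ring
    · refine Finset.sum_congr rfl fun x _ => ?_
      rw [mul_zero, Complex.exp_zero, mul_one, mul_pow]
      ring
  -- the G-side condition is equivalent to the moment condition
  have hGiff : (∀ j ≤ m, ∀ ℓ : Fin r,
      iteratedDeriv j (fun ξ : ℂ =>
          (∑ i : Fin r, symb (fun k => v k i) ξ *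
            symbM (fun k => a (1 + 2 * k)) i ℓ ξ) * Complex.exp (-Complex.I * ξ / 2) -
          ∑ i : Fin r, symb (fun k => v k i) ξ *
            symbM (fun k => a (2 * k)) i ℓ ξ) 0 = 0) ↔
      (∀ j ≤ m, ∀ ℓ : Fin r, S0 j ℓ = S1 j ℓ) := by
    have hpt : ∀ (j : ℕ) (ℓ : Fin r),
        (iteratedDeriv j (fun ξ : ℂ =>
          (∑ i : Fin r, symb (fun k => v k i) ξ *
            symbM (fun k => a (1 + 2 * k)) i ℓ ξ) * Complex.exp (-Complex.I * ξ / 2) -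
          ∑ i : Fin r, symb (fun k => v k i) ξ *
            symbM (fun k => a (2 * k)) i ℓ ξ) 0 = 0) ↔ S0 j ℓ = S1 j ℓ := by
      intro j ℓ
      rw [hGder j ℓ]
      constructor
      · intro h
        have hne : ((-Complex.I) ^ j : ℂ) ≠ 0 :=
          pow_ne_zero _ (neg_ne_zero.2 Complex.I_ne_zero)
        have h5 := (mul_eq_zero.1 h).resolve_left hne
        exact (sub_eq_zero.1 h5).symm
      · intro h
        rw [h, sub_self, mul_zero]
    constructor
    · intro h j hj ℓ
      exact (hpt j ℓ).1 (h j hj ℓ)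
    · intro h j hj ℓ
      exact (hpt j ℓ).2 (h j hj ℓ)
  -- P i as a finite sum
  have hP : ∀ i : Fin r, P i = ∑ n ∈ Sv,
      v n i • ((C ((Nat.factorial m : ℂ))⁻¹ * X ^ m).comp (X - C ((n : ℂ)))) := by
    intro i
    rw [hPdef i]
    unfold pconv
    apply finsum_eq_finset_sum_of_support_subset
    intro n hn
    simp only [Function.mem_support] at hn
    by_contra hnS
    apply hn
    simp [hv0 n hnS i]
  have hPeval : ∀ (i : Fin r) (x : ℂ), (P i).eval x
      = ∑ n ∈ Sv, v n i * ((Nat.factorial m : ℂ)⁻¹ * (x - (n : ℂ)) ^ m) := by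
    intro i x
    rw [hP i, Polynomial.eval_finset_sum]
    refine Finset.sum_congr rfl fun n _ => ?_
    simp [smul_eq_mul]
  -- the two polynomials
  set A : Fin r → Polynomial ℂ := fun ℓ => ∑ x ∈ TT,
      (v x.1 x.2.2 * a (2 * x.2.1) x.2.2 ℓ) •
        ((X : Polynomial ℂ) - C ((x.1 : ℂ) + (x.2.1 : ℂ))) ^ m with hAdef
  set D : Fin r → Polynomial ℂ := fun ℓ => ∑ x ∈ TT,
      (v x.1 x.2.2 * a (1 + 2 * x.2.1) x.2.2 ℓ) •
        ((X : Polynomial ℂ) - C ((x.1 : ℂ) + (x.2.1 : ℂ) + 2⁻¹)) ^ m with hDdef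
  have hAeval : ∀ (ℓ : Fin r) (z : ℂ), (A ℓ).eval z
      = ∑ n ∈ Sv, ∑ k ∈ K, ∑ i, (v n i * a (2 * k) i ℓ) * (z - ((n : ℂ) + (k : ℂ))) ^ m := by
    intro ℓ z
    rw [hAdef]
    simp only
    rw [Polynomial.eval_finset_sum]
    rw [show (∑ x ∈ TT, ((v x.1 x.2.2 * a (2 * x.2.1) x.2.2 ℓ) •
          ((X : Polynomial ℂ) - C ((x.1 : ℂ) + (x.2.1 : ℂ))) ^ m).eval z)
        = ∑ x ∈ TT, (v x.1 x.2.2 * a (2 * x.2.1) x.2.2 ℓ) *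
            (z - ((x.1 : ℂ) + (x.2.1 : ℂ))) ^ m from
      Finset.sum_congr rfl fun x _ => by simp]
    exact hTTsum (fun n k i => (v n i * a (2 * k) i ℓ) * (z - ((n : ℂ) + (k : ℂ))) ^ m)
  have hDeval : ∀ (ℓ : Fin r) (z : ℂ), (D ℓ).eval z
      = ∑ n ∈ Sv, ∑ k ∈ K, ∑ i, (v n i * a (1 + 2 * k) i ℓ) *
          (z - ((n : ℂ) + (k : ℂ) + 2⁻¹)) ^ m := by
    intro ℓ z
    rw [hDdef]
    simp only
    rw [Polynomial.eval_finset_sum]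
    rw [show (∑ x ∈ TT, ((v x.1 x.2.2 * a (1 + 2 * x.2.1) x.2.2 ℓ) •
          ((X : Polynomial ℂ) - C ((x.1 : ℂ) + (x.2.1 : ℂ) + 2⁻¹)) ^ m).eval z)
        = ∑ x ∈ TT, (v x.1 x.2.2 * a (1 + 2 * x.2.1) x.2.2 ℓ) *
            (z - ((x.1 : ℂ) + (x.2.1 : ℂ) + 2⁻¹)) ^ m from
      Finset.sum_congr rfl fun x _ => by simp]
    exact hTTsum (fun n k i => (v n i * a (1 + 2 * k) i ℓ) *
      (z - ((n : ℂ) + (k : ℂ) + 2⁻¹)) ^ m)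
  -- evaluating the subdivision operator
  have hsd : ∀ (jj t e : ℤ), (e = 0 ∨ e = 1) → jj = 2 * t + e → ∀ ℓ : Fin r,
      sd a (fun k i => (P i).eval ((k : ℂ))) jj ℓ
        = 2 * ∑ k ∈ K, ∑ i, (P i).eval (((t - k : ℤ) : ℂ)) * a (e + 2 * k) i ℓ := by
    intro jj t e he hjj ℓ
    subst hjj
    show 2 * (∑ᶠ k : ℤ, ∑ i, (P i).eval ((k : ℂ)) * a (2 * t + e - 2 * k) i ℓ) = _
    congr 1
    rw [← finsum_comp_equiv (Equiv.subLeft t)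
      (f := fun k : ℤ => ∑ i, (P i).eval ((k : ℂ)) * a (2 * t + e - 2 * k) i ℓ)]
    have hcong : ∀ k : ℤ,
        (∑ i, (P i).eval (((Equiv.subLeft t) k : ℂ)) *
          a (2 * t + e - 2 * ((Equiv.subLeft t) k)) i ℓ)
        = ∑ i, (P i).eval (((t - k : ℤ) : ℂ)) * a (e + 2 * k) i ℓ := by
      intro k
      simp only [Equiv.subLeft_apply]
      refine Finset.sum_congr rfl fun i _ => ?_
      rw [show 2 * t + e - 2 * (t - k) = e + 2 * k by ring]
    rw [finsum_congr hcong]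
    apply finsum_eq_finset_sum_of_support_subset
    intro k hk
    simp only [Function.mem_support] at hk
    by_contra hkK
    apply hk
    apply Finset.sum_eq_zero
    intro i _
    rcases he with rfl | rfl
    · rw [show (0 : ℤ) + 2 * k = 2 * k by ring, hK0 k hkK i ℓ, mul_zero]
    · rw [hK1 k hkK i ℓ, mul_zero]
  have hsd_even : ∀ (t : ℤ) (ℓ : Fin r),
      sd a (fun k i => (P i).eval ((k : ℂ))) (2 * t) ℓ
        = 2 * (Nat.factorial m : ℂ)⁻¹ * (A ℓ).eval ((t : ℂ)) := by
    intro t ℓ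
    rw [hsd (2 * t) t 0 (Or.inl rfl) (by ring) ℓ, hAeval]
    have h1 : ∀ k ∈ K, (∑ i, (P i).eval (((t - k : ℤ) : ℂ)) * a (0 + 2 * k) i ℓ)
        = ∑ i : Fin r, ∑ n ∈ Sv,
            v n i * ((Nat.factorial m : ℂ)⁻¹ *
              ((t : ℂ) - ((n : ℂ) + (k : ℂ))) ^ m) * a (2 * k) i ℓ := by
      intro k _
      refine Finset.sum_congr rfl fun i _ => ?_
      rw [hPeval i, Finset.sum_mul, show (0 : ℤ) + 2 * k = 2 * k by ring]
      refine Finset.sum_congr rfl fun n _ => ?_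
      push_cast
      rw [show ((t : ℂ) - (k : ℂ) - (n : ℂ)) = ((t : ℂ) - ((n : ℂ) + (k : ℂ))) by ring]
    rw [Finset.sum_congr rfl h1]
    rw [sum_rot K Finset.univ Sv (fun k i n =>
      v n i * ((Nat.factorial m : ℂ)⁻¹ *
        ((t : ℂ) - ((n : ℂ) + (k : ℂ))) ^ m) * a (2 * k) i ℓ)]
    rw [mul_assoc]
    simp only [Finset.mul_sum]
    refine Finset.sum_congr rfl fun n _ => ?_
    refine Finset.sum_congr rfl fun k _ => ?_
    refine Finset.sum_congr rfl fun i _ => ?_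
    ring
  have hsd_odd : ∀ (t : ℤ) (ℓ : Fin r),
      sd a (fun k i => (P i).eval ((k : ℂ))) (2 * t + 1) ℓ
        = 2 * (Nat.factorial m : ℂ)⁻¹ * (D ℓ).eval ((t : ℂ) + 2⁻¹) := by
    intro t ℓ
    rw [hsd (2 * t + 1) t 1 (Or.inr rfl) (by ring) ℓ, hDeval]
    have h1 : ∀ k ∈ K, (∑ i, (P i).eval (((t - k : ℤ) : ℂ)) * a (1 + 2 * k) i ℓ)
        = ∑ i : Fin r, ∑ n ∈ Sv,
            v n i * ((Nat.factorial m : ℂ)⁻¹ *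
              (((t : ℂ) + 2⁻¹) - ((n : ℂ) + (k : ℂ) + 2⁻¹)) ^ m) * a (1 + 2 * k) i ℓ := by
      intro k _
      refine Finset.sum_congr rfl fun i _ => ?_
      rw [hPeval i, Finset.sum_mul]
      refine Finset.sum_congr rfl fun n _ => ?_
      push_cast
      rw [show ((t : ℂ) - (k : ℂ) - (n : ℂ))
        = (((t : ℂ) + 2⁻¹) - ((n : ℂ) + (k : ℂ) + 2⁻¹)) by ring]
    rw [Finset.sum_congr rfl h1]
    rw [sum_rot K Finset.univ Sv (fun k i n =>
      v n i * ((Nat.factorial m : ℂ)⁻¹ *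
        (((t : ℂ) + 2⁻¹) - ((n : ℂ) + (k : ℂ) + 2⁻¹)) ^ m) * a (1 + 2 * k) i ℓ)]
    rw [mul_assoc]
    simp only [Finset.mul_sum]
    refine Finset.sum_congr rfl fun n _ => ?_
    refine Finset.sum_congr rfl fun k _ => ?_
    refine Finset.sum_congr rfl fun i _ => ?_
    ring
  -- nonzero constant
  have hc2 : (2 * (Nat.factorial m : ℂ)⁻¹) ≠ 0 :=
    mul_ne_zero two_ne_zero
      (inv_ne_zero (Nat.cast_ne_zero.2 (Nat.factorial_ne_zero m)))
  -- the subdivision condition is equivalent to A = D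
  have hE1 : (∃ Q : Fin r → Polynomial ℂ, (∀ ℓ, (Q ℓ).natDegree ≤ m) ∧
      ∀ x : ℤ, ∀ ℓ, sd a (fun k i => (P i).eval ((k : ℂ))) x ℓ = (Q ℓ).eval ((x : ℂ))) ↔
      (∀ ℓ : Fin r, A ℓ = D ℓ) := by
    constructor
    · rintro ⟨Q, hQdeg, hQ⟩ ℓ
      have hQA : (Q ℓ).comp (C 2 * X) = C (2 * (Nat.factorial m : ℂ)⁻¹) * A ℓ := by
        apply poly_eq_of_int_eval
        intro t
        have h1 := hQ (2 * t) ℓ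
        rw [hsd_even t ℓ] at h1
        push_cast at h1
        rw [Polynomial.eval_comp]
        simp only [Polynomial.eval_mul, Polynomial.eval_C, Polynomial.eval_X]
        exact h1.symm
      have hQD : (Q ℓ).comp (C 2 * X + C 1)
          = C (2 * (Nat.factorial m : ℂ)⁻¹) * ((D ℓ).comp (X + C 2⁻¹)) := by
        apply poly_eq_of_int_eval
        intro t
        have h1 := hQ (2 * t + 1) ℓ
        rw [hsd_odd t ℓ] at h1
        push_cast at h1
        rw [Polynomial.eval_comp]
        simp only [Polynomial.eval_mul, Polynomial.eval_add, Polynomial.eval_C,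
          Polynomial.eval_X, Polynomial.eval_comp]
        exact h1.symm
      have hcomp : ((Q ℓ).comp (C 2 * X)).comp (X + C 2⁻¹) = (Q ℓ).comp (C 2 * X + C 1) := by
        rw [Polynomial.comp_assoc]
        congr 1
        rw [Polynomial.mul_comp, Polynomial.C_comp, Polynomial.X_comp]
        rw [mul_add, ← Polynomial.C_mul]
        norm_num
      have h8 := congrArg (fun p : Polynomial ℂ => p.comp (X + C (2⁻¹ : ℂ))) hQA
      rw [hcomp, hQD, Polynomial.mul_comp, Polynomial.C_comp] at h8
      have h9 := mul_left_cancel₀ (Polynomial.C_ne_zero.2 hc2) h8.symm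
      have h10 := congrArg (fun p : Polynomial ℂ => p.comp (X - C (2⁻¹ : ℂ))) h9
      rw [comp_translate_cancel, comp_translate_cancel] at h10
      exact h10
    · intro hAD
      refine ⟨fun ℓ => C (2 * (Nat.factorial m : ℂ)⁻¹) * ((A ℓ).comp (C 2⁻¹ * X)),
        fun ℓ => ?_, fun x ℓ => ?_⟩
      · refine le_trans (Polynomial.natDegree_C_mul_le _ _) ?_
        refine le_trans Polynomial.natDegree_comp_le ?_
        have hA_deg : (A ℓ).natDegree ≤ m := by
          rw [hAdef]
          simp only
          refine Polynomial.natDegree_sum_le_of_forall_le _ _ fun x _ => ?_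
          refine le_trans (Polynomial.natDegree_smul_le _ _) ?_
          refine le_trans (Polynomial.natDegree_pow_le) ?_
          rw [Polynomial.natDegree_X_sub_C, mul_one]
        have hq : ((C (2⁻¹ : ℂ) * X : Polynomial ℂ)).natDegree ≤ 1 :=
          le_trans (Polynomial.natDegree_C_mul_le _ _) Polynomial.natDegree_X_le
        calc (A ℓ).natDegree * ((C (2⁻¹ : ℂ) * X : Polynomial ℂ)).natDegree
            ≤ m * 1 := Nat.mul_le_mul hA_deg hq
          _ = m := mul_one m
      · rcases Int.even_or_odd x with ⟨t, ht⟩ | ⟨t, ht⟩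
        · have hx : x = 2 * t := by omega
          subst hx
          rw [hsd_even t ℓ]
          beta_reduce
          rw [Polynomial.eval_mul, Polynomial.eval_C, Polynomial.eval_comp]
          simp only [Polynomial.eval_mul, Polynomial.eval_C, Polynomial.eval_X]
          push_cast
          rw [show (2⁻¹ : ℂ) * (2 * (t : ℂ)) = (t : ℂ) by ring]
        · have hx : x = 2 * t + 1 := by omega
          subst hx
          rw [hsd_odd t ℓ]
          beta_reduce
          rw [hAD ℓ, Polynomial.eval_mul, Polynomial.eval_C, Polynomial.eval_comp]
          simp only [Polynomial.eval_mul, Polynomial.eval_C, Polynomial.eval_X]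
          push_cast
          rw [show (2⁻¹ : ℂ) * (2 * (t : ℂ) + 1) = (t : ℂ) + 2⁻¹ by ring]
  -- A = D is equivalent to the moment condition
  have hADiff : (∀ ℓ : Fin r, A ℓ = D ℓ) ↔ (∀ j ≤ m, ∀ ℓ : Fin r, S0 j ℓ = S1 j ℓ) := by
    have h := fun ℓ : Fin r => expsum_poly_eq_iff TT TT
      (fun x => v x.1 x.2.2 * a (2 * x.2.1) x.2.2 ℓ) (fun x => (x.1 : ℂ) + (x.2.1 : ℂ))
      (fun x => v x.1 x.2.2 * a (1 + 2 * x.2.1) x.2.2 ℓ)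
      (fun x => (x.1 : ℂ) + (x.2.1 : ℂ) + 2⁻¹) m
    have hpt : ∀ ℓ : Fin r, (A ℓ = D ℓ) ↔ (∀ j ≤ m, S0 j ℓ = S1 j ℓ) := by
      intro ℓ
      rw [hAdef, hDdef, hS0def, hS1def]
      simp only
      exact h ℓ
    constructor
    · intro hAD j hj ℓ
      exact (hpt ℓ).1 (hAD ℓ) j hj
    · intro hmom ℓ
      exact (hpt ℓ).2 fun j hj => hmom j hj ℓ
  exact ⟨(hE1.trans hADiff).trans hFiff.symm, hFiff.trans hGiff.symm⟩
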